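/- Let h(S) = (Σ_{i∈S} a_i)/(b0 + Σ_{i∈S} b_i) with b0 > 0, a_i ≥ 0, b_i > 0. If h is monotone nondecreasing (i.e., h(S) ≤ h(S∪{j}) for all S and j ∉ S), then h is submodular: h(S∪{i,j}) - h(S∪{j}) ≤ h(S∪{i}) - h(S) for all S and distinct i,j ∉ S. -/
import Mathlib

lemma key_frac (A B ai bi aj bj : ℝ) (hB : 0 < B) (hbi : 0 < bi) (hbj : 0 < bj)
    (m1 : A * (B + bi) ≤ (ai + A) * B) (m2 : A * (B + bj) ≤ (aj + A) * B) :
    (ai + (aj + A)) / (B + (bi + bj)) - (aj + A) / (B + bj)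
      ≤ (ai + A) / (B + bi) - A / B := by
  have h1 : (0:ℝ) < B + bj := by linarith
  have h2 : (0:ℝ) < B + (bi + bj) := by linarith
  have h3 : (0:ℝ) < B + bi := by linarith
  rw [div_sub_div _ _ h2.ne' h1.ne', div_sub_div _ _ h3.ne' hB.ne',
    div_le_div_iff₀ (mul_pos h2 h1) (mul_pos h3 hB)]
  nlinarith [mul_le_mul_of_nonneg_right m1 (by positivity : (0:ℝ) ≤ bj * (B + bj)),
    mul_le_mul_of_nonneg_right m2 (by positivity : (0:ℝ) ≤ bi * (B + bi))]

theorem stmt_1 {ι : Type*} [DecidableEq ι] (N : Finset ι) (a b : ι → ℝ) (b0 : ℝ)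
    (hb0 : 0 < b0) (ha : ∀ i ∈ N, 0 ≤ a i) (hb : ∀ i ∈ N, 0 < b i)
    (h : Finset ι → ℝ)
    (hdef : ∀ S : Finset ι, h S = (∑ i ∈ S, a i) / (b0 + ∑ i ∈ S, b i))
    (hmono : ∀ S : Finset ι, S ⊆ N → ∀ j ∈ N, j ∉ S → h S ≤ h (insert j S)) :
    ∀ S : Finset ι, S ⊆ N → ∀ i ∈ N, ∀ j ∈ N, i ∉ S → j ∉ S → i ≠ j →
      h (insert i (insert j S)) - h (insert j S) ≤ h (insert i S) - h S := by
  intro S hS i hi j hj hiS hjS hij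
  have hiS' : i ∉ insert j S := by
    simp only [Finset.mem_insert]
    rintro (rfl | hmem) <;> [exact hij rfl; exact hiS hmem]
  set A := ∑ k ∈ S, a k with hA
  set Bs := ∑ k ∈ S, b k with hBs
  have hBs0 : 0 ≤ Bs := Finset.sum_nonneg fun k hk => (hb k (hS hk)).le
  have hBpos : 0 < b0 + Bs := by linarith
  have hbi : 0 < b i := hb i hi
  have hbj : 0 < b j := hb j hj
  -- monotonicity at S with i
  have m1 : A * ((b0 + Bs) + b i) ≤ (a i + A) * (b0 + Bs) := by
    have := hmono S hS i hi hiS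
    rw [hdef, hdef, Finset.sum_insert hiS, Finset.sum_insert hiS] at this
    rw [div_le_div_iff₀ hBpos (by linarith)] at this
    linarith [this]
  have m2 : A * ((b0 + Bs) + b j) ≤ (a j + A) * (b0 + Bs) := by
    have := hmono S hS j hj hjS
    rw [hdef, hdef, Finset.sum_insert hjS, Finset.sum_insert hjS] at this
    rw [div_le_div_iff₀ hBpos (by linarith)] at this
    linarith [this]
  rw [hdef, hdef, hdef, hdef, Finset.sum_insert hiS', Finset.sum_insert hiS',
    Finset.sum_insert hjS, Finset.sum_insert hjS, Finset.sum_insert hiS,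
    Finset.sum_insert hiS]
  have := key_frac A (b0 + Bs) (a i) (b i) (a j) (b j) hBpos hbi hbj m1 m2
  convert this using 2 <;> ring
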